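/- Characterization of the singular space via Poisson brackets: let q: ℝ²ⁿ → ℂ be a quadratic form with Re q ≥ 0 and Hamilton map F. Then the singular space S = (⋂_{j=0}^{2n-1} Ker[Re F (Im F)ʲ]) ∩ ℝ²ⁿ equals {X ∈ ℝ²ⁿ : (H_{Im q}^k Re q)(X) = 0 for all k ≥ 0}, i.e., the set of points where Re q vanishes to infinite order along the flow of the Hamilton vector field of Im q; equivalently, X ∈ S if and only if t ↦ Re q(e^{tH_{Im q}}X) is identically zero on ℝ. -/

import Mathlib

open Matrix

noncomputable section

/-- The matrix of the standard symplectic form `σ((x,ξ),(y,η)) = ⟨ξ,y⟩ − ⟨x,η⟩` on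
`ℝⁿ_x × ℝⁿ_ξ`, so that `σ(X,Y) = X ⬝ᵥ (J.mulVec Y)`. -/
def symplJ (n : ℕ) : Matrix (Fin n ⊕ Fin n) (Fin n ⊕ Fin n) ℂ :=
  Matrix.fromBlocks 0 (-1) 1 0

/-- The Hamilton map `F` of the quadratic form with symmetric matrix `M`
(`q(X,Y) = Xᵀ M Y`), defined by `q(X,Y) = σ(X, F Y)`; explicitly `F = -J M`. -/
def hamiltonMap {n : ℕ} (M : Matrix (Fin n ⊕ Fin n) (Fin n ⊕ Fin n) ℂ) :
    Matrix (Fin n ⊕ Fin n) (Fin n ⊕ Fin n) ℂ :=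
  -(symplJ n) * M

/-- Real part of the Hamilton map. -/
def reF {n : ℕ} (M : Matrix (Fin n ⊕ Fin n) (Fin n ⊕ Fin n) ℂ) :
    Matrix (Fin n ⊕ Fin n) (Fin n ⊕ Fin n) ℝ :=
  fun i j => (hamiltonMap M i j).re

/-- Imaginary part of the Hamilton map. -/
def imF {n : ℕ} (M : Matrix (Fin n ⊕ Fin n) (Fin n ⊕ Fin n) ℂ) :
    Matrix (Fin n ⊕ Fin n) (Fin n ⊕ Fin n) ℝ :=
  fun i j => (hamiltonMap M i j).im

/-- Real part of the symmetric matrix of `q`, so that `Re q(X) = X ⬝ᵥ (Re M).mulVec X` for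
real `X`. -/
def reM {n : ℕ} (M : Matrix (Fin n ⊕ Fin n) (Fin n ⊕ Fin n) ℂ) :
    Matrix (Fin n ⊕ Fin n) (Fin n ⊕ Fin n) ℝ :=
  fun i j => (M i j).re

/-- The flow `e^{tH_{Im q}}` of the (linear) Hamilton vector field of `Im q`, which is
`X ↦ exp(2t Im F) X`. -/
def imFlow {n : ℕ} (M : Matrix (Fin n ⊕ Fin n) (Fin n ⊕ Fin n) ℂ) (t : ℝ)
    (X : Fin n ⊕ Fin n → ℝ) : Fin n ⊕ Fin n → ℝ :=
  (NormedSpace.exp ((2 * t) • imF M)).mulVec X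

end


noncomputable section AuxA
open Matrix NormedSpace
variable {ι : Type*} [Fintype ι] [DecidableEq ι]

def mvL (P : Matrix ι ι ℝ) (X : ι → ℝ) : Matrix ι ι ℝ →ₗ[ℝ] (ι → ℝ) where
  toFun B := (P * B).mulVec X
  map_add' B C := by simp [Matrix.mul_add, Matrix.add_mulVec]
  map_smul' r B := by simp [Matrix.mul_smul, Matrix.smul_mulVec]

lemma hasDerivAt_aux (A P : Matrix ι ι ℝ) (X : ι → ℝ) (t : ℝ) :
    HasDerivAt (fun s : ℝ => (P * exp (s • A)).mulVec X)
      ((P * A * exp (t • A)).mulVec X) t := by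
  letI : NormedRing (Matrix ι ι ℝ) := Matrix.linftyOpNormedRing
  letI : NormedAlgebra ℝ (Matrix ι ι ℝ) := Matrix.linftyOpNormedAlgebra
  have h := hasDerivAt_exp_smul_const' (𝕂 := ℝ) A t
  have hL := ((mvL P X).toContinuousLinearMap).hasFDerivAt (x := exp (t • A))
  have h2 := hL.comp_hasDerivAt t h
  rw [Matrix.mul_assoc]; exact h2

lemma iteratedDeriv_aux (A P : Matrix ι ι ℝ) (X : ι → ℝ) (k : ℕ) :
    iteratedDeriv k (fun s : ℝ => (P * exp (s • A)).mulVec X)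
      = fun t => (P * A ^ k * exp (t • A)).mulVec X := by
  induction k with
  | zero => simp
  | succ k ih =>
    rw [iteratedDeriv_succ, ih]
    funext t
    rw [pow_succ, ← Matrix.mul_assoc]
    exact (hasDerivAt_aux A (P * A ^ k) X t).deriv

lemma iteratedDeriv_zero_fun {F : Type*} [NormedAddCommGroup F] [NormedSpace ℝ F] (k : ℕ) :
    iteratedDeriv k (fun _ : ℝ => (0 : F)) = fun _ => 0 := by
  induction k with
  | zero => simp
  | succ k ih => rw [iteratedDeriv_succ, ih]; funext t; simp

lemma aux1 (A P : Matrix ι ι ℝ) (X : ι → ℝ)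
    (h : ∀ t : ℝ, (P * exp (t • A)).mulVec X = 0) (k : ℕ) :
    (P * A ^ k).mulVec X = 0 := by
  have h0 : (fun s : ℝ => (P * exp (s • A)).mulVec X) = fun _ => (0 : ι → ℝ) := funext h
  have h1 := iteratedDeriv_aux A P X k
  rw [h0, iteratedDeriv_zero_fun] at h1
  have := congrFun h1 (0 : ℝ)
  simpa [exp_zero] using this.symm

lemma aux2 (A P : Matrix ι ι ℝ) (X : ι → ℝ)
    (h : ∀ k : ℕ, (P * A ^ k).mulVec X = 0) (t : ℝ) :
    (P * exp (t • A)).mulVec X = 0 := by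
  letI : NormedRing (Matrix ι ι ℝ) := Matrix.linftyOpNormedRing
  letI : NormedAlgebra ℝ (Matrix ι ι ℝ) := Matrix.linftyOpNormedAlgebra
  have : (P * exp (t • A)).mulVec X = (mvL P X).toContinuousLinearMap (exp (t • A)) := by
    simp [mvL]
  rw [this, congrFun (exp_eq_tsum ℝ) (t • A)]
  erw [ContinuousLinearMap.map_tsum _ (expSeries_summable' (𝕂 := ℝ) (t • A))]
  have : ∀ k : ℕ, (mvL P X).toContinuousLinearMap ((k.factorial : ℝ)⁻¹ • (t • A) ^ k) = 0 := by
    intro k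
    rw [smul_pow, _root_.map_smul, _root_.map_smul]
    simp only [LinearMap.coe_toContinuousLinearMap', mvL, LinearMap.coe_mk, AddHom.coe_mk, h k]
    simp
  exact (tsum_congr this).trans tsum_zero

lemma auxCH (A P : Matrix ι ι ℝ) (X : ι → ℝ)
    (h : ∀ j < Fintype.card ι, (P * A ^ j).mulVec X = 0) (k : ℕ) :
    (P * A ^ k).mulVec X = 0 := by
  set d := Fintype.card ι with hd
  have hdeg : A.charpoly.natDegree = d := Matrix.charpoly_natDegree_eq_dim A
  have hAd : A ^ d = -∑ i ∈ Finset.range d, A.charpoly.coeff i • A ^ i := by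
    have h0 := Matrix.aeval_self_charpoly A
    rw [Polynomial.aeval_eq_sum_range, hdeg, Finset.sum_range_succ] at h0
    have hc : A.charpoly.coeff d = 1 := by
      have := (Matrix.charpoly_monic A).coeff_natDegree
      rwa [hdeg] at this
    rw [hc, one_smul] at h0
    exact (eq_neg_of_add_eq_zero_right h0)
  induction k using Nat.strong_induction_on with
  | _ k ih =>
    by_cases hk : k < d
    · exact h k hk
    · push_neg at hk
      obtain ⟨m, rfl⟩ : ∃ m, k = m + d := ⟨k - d, (Nat.sub_add_cancel hk).symm⟩
      have hpow : A ^ (m + d) = -∑ i ∈ Finset.range d, A.charpoly.coeff i • A ^ (m + i) := by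
        rw [pow_add, hAd, mul_neg, Finset.mul_sum]
        congr 1
        refine Finset.sum_congr rfl fun i _ => ?_
        rw [mul_smul_comm, ← pow_add]
      have hch : (P * A ^ (m + d)).mulVec X = mvL P X (A ^ (m + d)) := rfl
      rw [hch, hpow, map_neg, map_sum, neg_eq_zero]
      refine Finset.sum_eq_zero fun i hi => ?_
      rw [_root_.map_smul]
      have : mvL P X (A ^ (m + i)) = (P * A ^ (m + i)).mulVec X := rfl
      rw [this, ih (m + i) (by have := Finset.mem_range.mp hi; omega), smul_zero]

lemma aux_analytic (A R : Matrix ι ι ℝ) (X : ι → ℝ)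
    (h : ∀ k : ℕ, iteratedDeriv k
      (fun t : ℝ => (exp (t • A)).mulVec X ⬝ᵥ R.mulVec ((exp (t • A)).mulVec X)) 0 = 0)
    (t : ℝ) :
    (exp (t • A)).mulVec X ⬝ᵥ R.mulVec ((exp (t • A)).mulVec X) = 0 := by
  set f := fun t : ℝ => (exp (t • A)).mulVec X ⬝ᵥ R.mulVec ((exp (t • A)).mulVec X) with hfdef
  have han : ∀ x : ℝ, AnalyticAt ℝ f x := by
    intro x
    letI : NormedRing (Matrix ι ι ℝ) := Matrix.linftyOpNormedRing
    letI : NormedAlgebra ℝ (Matrix ι ι ℝ) := Matrix.linftyOpNormedAlgebra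
    have hc : ∀ i, AnalyticAt ℝ (fun t : ℝ => (exp (t • A)).mulVec X i) x := by
      intro i
      have h1 : AnalyticAt ℝ (fun t : ℝ => t • A) x :=
        ((1 : ℝ →L[ℝ] ℝ).smulRight A).analyticAt x
      have h2 : AnalyticAt ℝ NormedSpace.exp (x • A) := exp_analytic _
      have h3 := AnalyticAt.comp (g := NormedSpace.exp) (f := fun t : ℝ => t • A) h2 h1
      have h4 := (((LinearMap.proj i).comp
        (mvL (1 : Matrix ι ι ℝ) X)).toContinuousLinearMap.analyticAt _).comp (f := fun t : ℝ => exp (t • A)) h3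
      convert h4 using 1
      funext s
      change _ = ((1 * exp (s • A)).mulVec X) i
      simp
    have hf : f = fun t => ∑ i, (exp (t • A)).mulVec X i *
        ∑ j, R i j * (exp (t • A)).mulVec X j := by
      funext s; simp [hfdef, dotProduct, Matrix.mulVec]
    rw [hf]
    exact Finset.analyticAt_fun_sum _ (fun i _ => (hc i).mul
      (Finset.analyticAt_fun_sum _ (fun j _ => analyticAt_const.mul (hc j))))
  obtain ⟨p, hp⟩ := han 0
  obtain ⟨r, hpb⟩ := hp
  have hball : ∀ y ∈ EMetric.ball (0 : ℝ) r, f y = 0 := by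
    intro y hy
    have hs := hpb.hasSum_iteratedFDeriv hy
    have hz : (fun k => (k.factorial : ℝ)⁻¹ • iteratedFDeriv ℝ k f 0 fun _ => y)
        = fun _ => 0 := by
      funext k
      rw [iteratedFDeriv_apply_eq_iteratedDeriv_mul_prod, h k, smul_zero, smul_zero]
    rw [hz] at hs
    simpa using hs.unique hasSum_zero
  have hev : f =ᶠ[nhds 0] 0 := Filter.eventuallyEq_of_mem (EMetric.ball_mem_nhds 0 hpb.r_pos) hball
  have heq := AnalyticOnNhd.eqOn_zero_of_preconnected_of_eventuallyEq_zero
    (fun x _ => han x : AnalyticOnNhd ℝ f Set.univ) isPreconnected_univ (Set.mem_univ 0) hev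
  exact heq (Set.mem_univ t)

end AuxA

noncomputable section Aux2
open Matrix NormedSpace Finset
variable {n : ℕ}

/-- The real symplectic matrix. -/
def symplJR (n : ℕ) : Matrix (Fin n ⊕ Fin n) (Fin n ⊕ Fin n) ℝ :=
  Matrix.fromBlocks 0 (-1) 1 0

lemma symplJR_sq : symplJR n * symplJR n = -1 := by
  have h1 : (-1 : Matrix (Fin n ⊕ Fin n) (Fin n ⊕ Fin n) ℝ) =
      Matrix.fromBlocks (-1) 0 0 (-1) := by
    rw [← Matrix.fromBlocks_one, Matrix.fromBlocks_neg, neg_zero]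
  rw [symplJR, Matrix.fromBlocks_multiply, h1]
  simp

lemma reF_eq (M : Matrix (Fin n ⊕ Fin n) (Fin n ⊕ Fin n) ℂ) :
    reF M = (-(symplJR n)) * reM M := by
  ext i j
  simp only [reF, hamiltonMap, reM, Matrix.mul_apply, Matrix.neg_mul, Matrix.neg_apply]
  rw [Complex.re_sum]
  refine Finset.sum_congr rfl fun k _ => ?_
  have hent : symplJ n i k = ((symplJR n i k : ℝ) : ℂ) := by
    cases i <;> cases k <;>
      simp [symplJ, symplJR, Matrix.fromBlocks, Matrix.one_apply, apply_ite]
  rw [hent]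
  simp [Complex.mul_re]
end Aux2

/-- characterization of the singular space via Poisson brackets. For a
quadratic form `q` (with symmetric matrix `M`) with `Re q ≥ 0` and Hamilton map `F`, the
singular space `S = (⋂_{j=0}^{2n-1} Ker[Re F (Im F)ʲ]) ∩ ℝ²ⁿ` equals the set of points where
`t ↦ Re q(e^{tH_{Im q}}X)` vanishes to infinite order at `t = 0`, and equals the set of
points where this function vanishes identically on `ℝ`. -/
theorem stmt14 {n : ℕ} (M : Matrix (Fin n ⊕ Fin n) (Fin n ⊕ Fin n) ℂ)
    (hMsym : Mᵀ = M)
    (hRe : ∀ X : Fin n ⊕ Fin n → ℝ, 0 ≤ X ⬝ᵥ (reM M).mulVec X) :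
    ({X : Fin n ⊕ Fin n → ℝ | ∀ j < 2 * n, (reF M * imF M ^ j).mulVec X = 0} =
      {X : Fin n ⊕ Fin n → ℝ | ∀ k : ℕ,
        iteratedDeriv k (fun t : ℝ => imFlow M t X ⬝ᵥ (reM M).mulVec (imFlow M t X)) 0 = 0}) ∧
    ({X : Fin n ⊕ Fin n → ℝ | ∀ j < 2 * n, (reF M * imF M ^ j).mulVec X = 0} =
      {X : Fin n ⊕ Fin n → ℝ | ∀ t : ℝ,
        imFlow M t X ⬝ᵥ (reM M).mulVec (imFlow M t X) = 0}) := by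
  classical
  set A : Matrix (Fin n ⊕ Fin n) (Fin n ⊕ Fin n) ℝ := (2 : ℝ) • imF M with hA
  set R : Matrix (Fin n ⊕ Fin n) (Fin n ⊕ Fin n) ℝ := reM M with hR
  have hcard : Fintype.card (Fin n ⊕ Fin n) = 2 * n := by
    simp [two_mul]
  have hflow : ∀ (t : ℝ) (X : Fin n ⊕ Fin n → ℝ),
      imFlow M t X = (NormedSpace.exp (t • A)).mulVec X := by
    intro t X
    simp only [imFlow, hA]
    rw [smul_smul, mul_comm]
  have hscale : ∀ (Q : Matrix (Fin n ⊕ Fin n) (Fin n ⊕ Fin n) ℝ) (k : ℕ)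
      (X : Fin n ⊕ Fin n → ℝ),
      (Q * A ^ k).mulVec X = (2 : ℝ) ^ k • (Q * imF M ^ k).mulVec X := by
    intro Q k X
    rw [hA, smul_pow, Matrix.mul_smul, Matrix.smul_mulVec]
  have hJmul : symplJR n * -(symplJR n) = 1 := by
    rw [mul_neg, symplJR_sq, neg_neg]
  have key1 : ∀ X : Fin n ⊕ Fin n → ℝ,
      (∀ j < 2 * n, (reF M * imF M ^ j).mulVec X = 0) ↔
        (∀ j < 2 * n, (R * imF M ^ j).mulVec X = 0) := by
    intro X
    have hform : ∀ j : ℕ, (reF M * imF M ^ j).mulVec X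
        = (-(symplJR n)).mulVec ((R * imF M ^ j).mulVec X) := by
      intro j
      rw [Matrix.mulVec_mulVec, ← Matrix.mul_assoc, hR, ← reF_eq]
    constructor
    · intro h j hj
      have h0 := h j hj
      rw [hform j] at h0
      have h1 := congrArg (fun v => (symplJR n).mulVec v) h0
      simpa only [Matrix.mulVec_mulVec, ← Matrix.mul_assoc, hJmul, Matrix.one_mul,
        Matrix.mulVec_zero, Matrix.one_mulVec] using h1
    · intro h j hj
      rw [hform j, h j hj, Matrix.mulVec_zero]
  have key2 : ∀ X : Fin n ⊕ Fin n → ℝ,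
      (∀ j < 2 * n, (R * imF M ^ j).mulVec X = 0) ↔
        (∀ k : ℕ, (R * A ^ k).mulVec X = 0) := by
    intro X
    constructor
    · intro h
      refine auxCH A R X (fun j hj => ?_) 
      rw [hscale]
      rw [h j (by rw [← hcard]; exact hj), smul_zero]
    · intro h j hj
      have h0 := h j
      rw [hscale] at h0
      have h2 : ((2 : ℝ) ^ j) ≠ 0 := by positivity
      rcases smul_eq_zero.mp h0 with hc | hv
      · exact absurd hc h2
      · exact hv
  have hsym : Rᵀ = R := by
    ext i j
    simp only [hR, reM, Matrix.transpose_apply]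
    have h1 := congrFun (congrFun hMsym i) j
    rw [Matrix.transpose_apply] at h1
    rw [h1]
  have hPSD : R.PosSemidef := by
    refine Matrix.PosSemidef.of_dotProduct_mulVec_nonneg ?_ ?_
    · rw [Matrix.IsHermitian, Matrix.conjTranspose_eq_transpose_of_trivial, hsym]
    · intro x
      simpa using hRe x
  have h1to3 : ∀ X : Fin n ⊕ Fin n → ℝ,
      (∀ j < 2 * n, (reF M * imF M ^ j).mulVec X = 0) →
      ∀ t : ℝ, imFlow M t X ⬝ᵥ R.mulVec (imFlow M t X) = 0 := by
    intro X hX t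
    have hk := (key2 X).mp ((key1 X).mp hX)
    have h0 := aux2 A R X hk t
    rw [hflow t X, Matrix.mulVec_mulVec, h0, dotProduct_zero]
  have h3to1 : ∀ X : Fin n ⊕ Fin n → ℝ,
      (∀ t : ℝ, imFlow M t X ⬝ᵥ R.mulVec (imFlow M t X) = 0) →
      ∀ j < 2 * n, (reF M * imF M ^ j).mulVec X = 0 := by
    intro X hX
    have hexp : ∀ t : ℝ, (R * NormedSpace.exp (t • A)).mulVec X = 0 := by
      intro t
      have hX' := hX t
      rw [hflow t X] at hX'
      have hz := (hPSD.dotProduct_mulVec_zero_iff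
        ((NormedSpace.exp (t • A)).mulVec X)).mp (by simpa using hX')
      rw [← Matrix.mulVec_mulVec]
      exact hz
    exact (key1 X).mpr ((key2 X).mpr (aux1 A R X hexp))
  have h3to2 : ∀ X : Fin n ⊕ Fin n → ℝ,
      (∀ t : ℝ, imFlow M t X ⬝ᵥ R.mulVec (imFlow M t X) = 0) →
      ∀ k : ℕ, iteratedDeriv k (fun t : ℝ => imFlow M t X ⬝ᵥ R.mulVec (imFlow M t X)) 0 = 0 := by
    intro X hX k
    have hfun : (fun t : ℝ => imFlow M t X ⬝ᵥ R.mulVec (imFlow M t X))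
        = fun _ : ℝ => (0 : ℝ) := funext hX
    rw [hfun, iteratedDeriv_zero_fun]
  have h2to3 : ∀ X : Fin n ⊕ Fin n → ℝ,
      (∀ k : ℕ, iteratedDeriv k (fun t : ℝ => imFlow M t X ⬝ᵥ R.mulVec (imFlow M t X)) 0 = 0) →
      ∀ t : ℝ, imFlow M t X ⬝ᵥ R.mulVec (imFlow M t X) = 0 := by
    intro X hX t
    have hfun : (fun t : ℝ => imFlow M t X ⬝ᵥ R.mulVec (imFlow M t X))
        = fun t : ℝ => (NormedSpace.exp (t • A)).mulVec X ⬝ᵥ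
            R.mulVec ((NormedSpace.exp (t • A)).mulVec X) := by
      funext s
      rw [hflow s X]
    rw [hflow t X]
    refine aux_analytic A R X (fun k => ?_) t
    rw [← hfun]
    exact hX k
  constructor
  · ext X
    simp only [Set.mem_setOf_eq]
    exact ⟨fun h => h3to2 X (h1to3 X h), fun h => h3to1 X (h2to3 X h)⟩
  · ext X
    simp only [Set.mem_setOf_eq]
    exact ⟨h1to3 X, h3to1 X⟩
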